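/- Let ℓ be a prime and let f : H → G be a homomorphism of finite groups whose kernel Z is contained in the center of H and has order coprime to ℓ, and whose range is a normal subgroup of G of index coprime to ℓ. Then: (i) for every noncyclic elementary abelian ℓ-subgroup A of G there exist a noncyclic elementary abelian ℓ-subgroup E of H and an element g ∈ G such that g A g⁻¹ = f(E); and (ii) if moreover f is surjective, then the assignment E ↦ f(E) induces a bijection between the H-conjugacy classes of noncyclic elementary abelian ℓ-subgroups of H and the G-conjugacy classes of noncyclic elementary abelian ℓ-subgroups of G. -/

import Mathlib

/-- An elementary abelian `ℓ`-subgroup: a subgroup that is commutative and in which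
every element `x` satisfies `x ^ ℓ = 1`. -/
def IsElementaryAbelian (ℓ : ℕ) {G : Type*} [Group G] (E : Subgroup G) : Prop :=
  (∀ x ∈ E, ∀ y ∈ E, x * y = y * x) ∧ ∀ x ∈ E, x ^ ℓ = 1

/-- The conjugate subgroup `g E g⁻¹`. -/
def conjSubgroup {G : Type*} [Group G] (g : G) (E : Subgroup G) : Subgroup G :=
  E.map (MulAut.conj g).toMonoidHom

/-- A maximal elementary abelian `ℓ`-subgroup: one that is not properly contained in
any other elementary abelian `ℓ`-subgroup. -/
def IsMaximalElementaryAbelian (ℓ : ℕ) {G : Type*} [Group G] (E : Subgroup G) : Prop :=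
  IsElementaryAbelian ℓ E ∧
    ∀ E' : Subgroup G, IsElementaryAbelian ℓ E' → E ≤ E' → E' = E

/-- The type of noncyclic elementary abelian `ℓ`-subgroups of `G`
(elementary abelian of order at least `ℓ²`). -/
def NoncyclicElemAb (ℓ : ℕ) (G : Type*) [Group G] : Type _ :=
  {E : Subgroup G // IsElementaryAbelian ℓ E ∧ ℓ ^ 2 ≤ Nat.card E}

/-- The conjugacy relation on noncyclic elementary abelian `ℓ`-subgroups. -/
def conjRel (ℓ : ℕ) (G : Type*) [Group G] :
    NoncyclicElemAb ℓ G → NoncyclicElemAb ℓ G → Prop :=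
  fun E E' => ∃ g : G, conjSubgroup g E.1 = E'.1

section AuxLemmas

variable {H G : Type*} [Group H] [Group G]

lemma isPGroup_of_exponent {ℓ : ℕ} (hℓ : ℓ.Prime) {A : Subgroup G}
    (hA : ∀ x ∈ A, x ^ ℓ = 1) : IsPGroup ℓ A := fun g =>
  ⟨1, Subtype.ext (by push_cast [pow_one]; exact hA g g.2)⟩

lemma pgroup_eq_bot_of_coprime {ℓ : ℕ} [Finite G] (hℓ : ℓ.Prime) {Q : Subgroup G}
    (hQ : IsPGroup ℓ Q) (hc : (Nat.card Q).Coprime ℓ) : Q = ⊥ := by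
  haveI : Fact ℓ.Prime := ⟨hℓ⟩
  obtain ⟨n, hn⟩ := hQ.exists_card_eq
  rcases Nat.eq_zero_or_pos n with rfl | hpos
  · exact Subgroup.card_eq_one.mp (by simpa using hn)
  · exfalso
    have hdvd : ℓ ∣ Nat.card Q := hn ▸ dvd_pow_self ℓ hpos.ne'
    exact hℓ.one_lt.ne' (Nat.Coprime.eq_one_of_dvd hc.symm hdvd)

lemma injOn_of_inter_ker_eq_bot {f : H →* G} {M : Subgroup H}
    (h : M ⊓ f.ker = ⊥) : Set.InjOn f M := by
  intro x hx y hy hxy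
  have hmem : x⁻¹ * y ∈ M ⊓ f.ker := by
    refine Subgroup.mem_inf.mpr ⟨mul_mem (inv_mem hx) hy, ?_⟩
    rw [MonoidHom.mem_ker, map_mul, map_inv, hxy, inv_mul_cancel]
  rw [h, Subgroup.mem_bot] at hmem
  exact (inv_mul_eq_one.mp hmem)

lemma card_map_of_injOn {f : H →* G} {E : Subgroup H} (hinj : Set.InjOn f E) :
    Nat.card (E.map f) = Nat.card E := by
  rw [← SetLike.coe_sort_coe, Subgroup.coe_map, Nat.card_image_of_injOn hinj,
    SetLike.coe_sort_coe]

lemma eq_of_map_eq {f : H →* G} {M E₁ E₂ : Subgroup H} (hinj : Set.InjOn f M)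
    (h1 : E₁ ≤ M) (h2 : E₂ ≤ M) (h : E₁.map f = E₂.map f) : E₁ = E₂ := by
  have key : ∀ {A B : Subgroup H}, A ≤ M → B ≤ M → A.map f ≤ B.map f → A ≤ B := by
    intro A B hA hB hAB x hx
    obtain ⟨y, hy, hxy⟩ := hAB (Subgroup.mem_map_of_mem f hx)
    rwa [hinj (hB hy) (hA hx) hxy] at hy
  exact le_antisymm (key h1 h2 h.le) (key h2 h1 h.ge)

lemma conjSubgroup_one (E : Subgroup G) : conjSubgroup 1 E = E := by
  ext x; simp [conjSubgroup]

lemma conjSubgroup_conjSubgroup (g g' : G) (E : Subgroup G) :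
    conjSubgroup g (conjSubgroup g' E) = conjSubgroup (g * g') E := by
  unfold conjSubgroup
  rw [Subgroup.map_map]
  congr 1
  ext x
  simp [mul_assoc]

lemma conjRel_equivalence (ℓ : ℕ) (G : Type*) [Group G] : Equivalence (conjRel ℓ G) := by
  constructor
  · exact fun E => ⟨1, conjSubgroup_one E.1⟩
  · rintro E E' ⟨g, hg⟩
    exact ⟨g⁻¹, by rw [← hg, conjSubgroup_conjSubgroup, inv_mul_cancel, conjSubgroup_one]⟩
  · rintro E E' E'' ⟨g, hg⟩ ⟨g', hg'⟩
    exact ⟨g' * g, by rw [← conjSubgroup_conjSubgroup, hg, hg']⟩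

lemma map_conjSubgroup (f : H →* G) (h : H) (E : Subgroup H) :
    (conjSubgroup h E).map f = conjSubgroup (f h) (E.map f) := by
  unfold conjSubgroup
  rw [Subgroup.map_map, Subgroup.map_map]
  congr 1
  ext x
  simp

end AuxLemmas

section Key

variable {H G : Type*} [Group H] [Group G] [Finite H] [Finite G]

/-- Key structural lemma: given `A ≤ f.range` elementary abelian, the preimage of `A`
is nilpotent and its Sylow `ℓ`-subgroup `M` maps isomorphically onto `A` and contains
every `ℓ`-subgroup mapping into `A`. -/
lemma key_lemma (ℓ : ℕ) (hℓ : ℓ.Prime) (f : H →* G)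
    (hker : f.ker ≤ Subgroup.center H)
    (hkerord : (Nat.card f.ker).Coprime ℓ)
    {A : Subgroup G} (hApow : ∀ x ∈ A, x ^ ℓ = 1)
    (hAcomm : ∀ x ∈ A, ∀ y ∈ A, x * y = y * x)
    (hArange : A ≤ f.range) :
    ∃ M : Subgroup H, M.map f = A ∧ Set.InjOn f M ∧ IsPGroup ℓ M ∧
      (∀ E : Subgroup H, IsPGroup ℓ E → E.map f ≤ A → E ≤ M) := by
  haveI : Fact ℓ.Prime := ⟨hℓ⟩
  set K := A.comap f with hK
  have hnil : Group.IsNilpotent ↥K := by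
    set g := (f.comp K.subtype).rangeRestrict with hg
    have hgker : g.ker ≤ Subgroup.center ↥K := by
      intro x hx
      rw [MonoidHom.ker_rangeRestrict] at hx
      have hxc : (x : H) ∈ Subgroup.center H := hker hx
      rw [Subgroup.mem_center_iff] at hxc ⊢
      intro y
      exact Subtype.ext (hxc y)
    have hcomm : ∀ a b : ↥(f.comp K.subtype).range, a * b = b * a := by
      rintro ⟨a, x, rfl⟩ ⟨b, y, rfl⟩
      have hx : f x ∈ A := x.2
      have hy : f y ∈ A := y.2
      exact Subtype.ext (hAcomm _ hx _ hy)
    letI : CommGroup ↥(f.comp K.subtype).range :=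
      { (inferInstance : Group ↥(f.comp K.subtype).range) with mul_comm := hcomm }
    exact isNilpotent_of_ker_le_center g hgker
  obtain ⟨P⟩ : Nonempty (Sylow ℓ ↥K) := inferInstance
  have hPnormal : (P : Subgroup ↥K).Normal := by
    have htfae := (isNilpotent_of_finite_tfae (G := ↥K)).out 0 3
    exact (htfae.mp hnil) ℓ ⟨hℓ⟩ P
  haveI := Sylow.unique_of_normal P hPnormal
  set M := (P : Subgroup ↥K).map K.subtype with hM
  have hMK : M ≤ K := Subgroup.map_subtype_le _
  have hMp : IsPGroup ℓ M := P.isPGroup'.map K.subtype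
  have hmax : ∀ E : Subgroup H, IsPGroup ℓ E → E.map f ≤ A → E ≤ M := by
    intro E hE hEA
    have hEK : E ≤ K := fun x hx => Subgroup.mem_comap.2 (hEA ⟨x, hx, rfl⟩)
    have hE' : IsPGroup ℓ ↥(E.subgroupOf K) :=
      hE.of_equiv (Subgroup.subgroupOfEquivOfLe hEK).symm
    obtain ⟨Q, hQ⟩ := hE'.exists_le_sylow
    have hQP : Q = P := Subsingleton.elim _ _
    rw [hQP] at hQ
    have : (E.subgroupOf K).map K.subtype ≤ M := Subgroup.map_mono hQ
    rwa [Subgroup.subgroupOf_map_subtype, inf_of_le_left hEK] at this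
  have hinter : M ⊓ f.ker = ⊥ := by
    refine pgroup_eq_bot_of_coprime hℓ hMp.to_inf_left ?_
    exact Nat.Coprime.coprime_dvd_left (Subgroup.card_dvd_of_le inf_le_right) hkerord
  have hinj : Set.InjOn f M := injOn_of_inter_ker_eq_bot hinter
  have hmapA : M.map f = A := by
    refine le_antisymm (le_trans (Subgroup.map_mono hMK) ?_) ?_
    · exact Subgroup.map_comap_le f A
    · intro a ha
      obtain ⟨x, hxA⟩ := hArange ha
      have hxK : x ∈ K := Subgroup.mem_comap.2 (hxA ▸ ha)
      set n := orderOf x with hn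
      have hn0 : n ≠ 0 := (orderOf_pos x).ne'
      set v := n.factorization ℓ with hv
      set m := ordCompl[ℓ] n with hm
      have hcop : Nat.Coprime ℓ m := Nat.coprime_ordCompl hℓ hn0
      obtain ⟨m', -, hm'⟩ := Nat.exists_mul_mod_eq_one_of_coprime hcop.symm hℓ.one_lt
      set y := x ^ (m * m') with hy
      have hyK : y ∈ K := pow_mem hxK _
      have hypow : y ^ ℓ ^ v = 1 := by
        rw [hy, ← pow_mul, mul_comm m m', mul_assoc, mul_comm m (ℓ ^ v),
          Nat.ordProj_mul_ordCompl_eq_self n ℓ, pow_mul', hn, pow_orderOf_eq_one, one_pow]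
      have hfy : f y = a := by
        have h1 : a ^ ℓ = 1 := hApow a ha
        have h2 : m * m' = ℓ * (m * m' / ℓ) + 1 := by
          conv_lhs => rw [← Nat.div_add_mod (m * m') ℓ, hm']
        rw [hy, map_pow, hxA, h2, pow_add, pow_one, pow_mul, h1, one_pow, one_mul]
      have hzp : IsPGroup ℓ ↥(Subgroup.zpowers y) := by
        intro g
        refine ⟨v, ?_⟩
        obtain ⟨k, hk⟩ := g.2
        refine Subtype.ext ?_
        push_cast
        rw [← hk, ← zpow_natCast (y ^ k), ← zpow_mul, mul_comm, zpow_mul,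
          zpow_natCast, hypow, one_zpow]
      have hzA : (Subgroup.zpowers y).map f ≤ A := by
        rw [MonoidHom.map_zpowers, hfy]
        exact Subgroup.zpowers_le.2 ha
      exact ⟨y, hmax _ hzp hzA (Subgroup.mem_zpowers y), hfy⟩
  exact ⟨M, hmapA, hinj, hMp, hmax⟩

end Key

/-- a central-kernel homomorphism with kernel of order prime to `ℓ` and
normal range of index prime to `ℓ` induces a surjection, and a bijection when it is
surjective, on conjugacy classes of noncyclic elementary abelian `ℓ`-subgroups. -/
theorem conjClasses_noncyclic_elemAb_of_hom
    (ℓ : ℕ) (hℓ : ℓ.Prime) {H G : Type*} [Group H] [Group G] [Finite H] [Finite G]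
    (f : H →* G)
    (hker : f.ker ≤ Subgroup.center H)
    (hkerord : (Nat.card f.ker).Coprime ℓ)
    (hrange : f.range.Normal)
    (hindex : f.range.index.Coprime ℓ) :
    (∀ A : Subgroup G, IsElementaryAbelian ℓ A → ℓ ^ 2 ≤ Nat.card A →
      ∃ E : Subgroup H, IsElementaryAbelian ℓ E ∧ ℓ ^ 2 ≤ Nat.card E ∧
        ∃ g : G, conjSubgroup g A = E.map f) ∧
    (Function.Surjective f →
      ∃ e : Quot (conjRel ℓ H) ≃ Quot (conjRel ℓ G),
        ∀ (E : NoncyclicElemAb ℓ H) (A : NoncyclicElemAb ℓ G),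
          A.1 = E.1.map f →
          e (Quot.mk (conjRel ℓ H) E) = Quot.mk (conjRel ℓ G) A) := by
  haveI : Fact ℓ.Prime := ⟨hℓ⟩
  haveI := hrange
  have hle_range : ∀ A : Subgroup G, IsPGroup ℓ A → A ≤ f.range := by
    intro A hA
    have h1 : IsPGroup ℓ (A.map (QuotientGroup.mk' f.range)) := hA.map _
    have h2 : (Nat.card (A.map (QuotientGroup.mk' f.range))).Coprime ℓ := by
      refine Nat.Coprime.coprime_dvd_left ?_ hindex
    -- card of subgroup of quotient divides card of quotient = index
      have hd := Subgroup.card_subgroup_dvd_card (A.map (QuotientGroup.mk' f.range))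
      rwa [← Subgroup.index_eq_card] at hd
    have h3 := pgroup_eq_bot_of_coprime hℓ h1 h2
    rwa [Subgroup.map_eq_bot_iff, QuotientGroup.ker_mk'] at h3
  have part1 : ∀ A : Subgroup G, IsElementaryAbelian ℓ A → ℓ ^ 2 ≤ Nat.card A →
      ∃ E : Subgroup H, IsElementaryAbelian ℓ E ∧ ℓ ^ 2 ≤ Nat.card E ∧
        ∃ g : G, conjSubgroup g A = E.map f := by
    intro A hA hAcard
    obtain ⟨hAcomm, hApow⟩ := hA
    obtain ⟨M, hmap, hinj, hMp, hmax⟩ := key_lemma ℓ hℓ f hker hkerord hApow hAcomm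
      (hle_range A (isPGroup_of_exponent hℓ hApow))
    have hMcomm : ∀ x ∈ M, ∀ y ∈ M, x * y = y * x := by
      intro x hx y hy
      apply hinj (mul_mem hx hy) (mul_mem hy hx)
      rw [map_mul, map_mul]
      exact hAcomm _ (hmap ▸ Subgroup.mem_map_of_mem f hx) _
        (hmap ▸ Subgroup.mem_map_of_mem f hy)
    have hMpow : ∀ x ∈ M, x ^ ℓ = 1 := by
      intro x hx
      apply hinj (pow_mem hx ℓ) (one_mem M)
      rw [map_pow, map_one]
      exact hApow _ (hmap ▸ Subgroup.mem_map_of_mem f hx)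
    have hMcard : ℓ ^ 2 ≤ Nat.card M := by
      rwa [← card_map_of_injOn hinj, hmap]
    exact ⟨M, ⟨hMcomm, hMpow⟩, hMcard, 1, by rw [conjSubgroup_one]; exact hmap.symm⟩
  refine ⟨part1, ?_⟩
  intro hsurj
  have hHinj : ∀ E : Subgroup H, (∀ x ∈ E, x ^ ℓ = 1) → Set.InjOn f E := by
    intro E hE
    apply injOn_of_inter_ker_eq_bot
    apply pgroup_eq_bot_of_coprime hℓ (isPGroup_of_exponent hℓ hE).to_inf_left
    exact Nat.Coprime.coprime_dvd_left (Subgroup.card_dvd_of_le inf_le_right) hkerord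
  have hφprop : ∀ E : NoncyclicElemAb ℓ H,
      IsElementaryAbelian ℓ (E.1.map f) ∧ ℓ ^ 2 ≤ Nat.card (E.1.map f) := by
    intro E
    obtain ⟨⟨hcomm, hpow⟩, hcard⟩ := E.2
    refine ⟨⟨?_, ?_⟩, ?_⟩
    · rintro x ⟨a, ha, rfl⟩ y ⟨b, hb, rfl⟩
      rw [← map_mul, ← map_mul, hcomm a ha b hb]
    · rintro x ⟨a, ha, rfl⟩
      rw [← map_pow, hpow a ha, map_one]
    · rw [card_map_of_injOn (hHinj E.1 hpow)]
      exact hcard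
  let φ : NoncyclicElemAb ℓ H → NoncyclicElemAb ℓ G := fun E => ⟨E.1.map f, hφprop E⟩
  have hresp : ∀ E E' : NoncyclicElemAb ℓ H, conjRel ℓ H E E' → conjRel ℓ G (φ E) (φ E') := by
    rintro E E' ⟨h, hh⟩
    refine ⟨f h, ?_⟩
    show conjSubgroup (f h) (E.1.map f) = E'.1.map f
    rw [← map_conjSubgroup, hh]
  let Φ : Quot (conjRel ℓ H) → Quot (conjRel ℓ G) := Quot.map φ hresp
  have hΦmk : ∀ E, Φ (Quot.mk _ E) = Quot.mk _ (φ E) := fun _ => rfl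
  have hsurjΦ : Function.Surjective Φ := by
    intro q
    induction q using Quot.ind with
    | mk A =>
      obtain ⟨E, hEel, hEcard, g, hg⟩ := part1 A.1 A.2.1 A.2.2
      refine ⟨Quot.mk _ ⟨E, hEel, hEcard⟩, ?_⟩
      refine (hΦmk ⟨E, hEel, hEcard⟩).trans ?_
      exact (Quot.sound ⟨g, hg⟩).symm
  have hinjΦ : Function.Injective Φ := by
    intro q q'
    induction q using Quot.ind with
    | mk E =>
      induction q' using Quot.ind with
      | mk E' =>
        intro h
        rw [hΦmk, hΦmk, Quot.eq] at h
        obtain ⟨g, hg⟩ := (conjRel_equivalence ℓ G).eqvGen_iff.mp h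
        obtain ⟨h0, rfl⟩ := hsurj g
        have hg' : (conjSubgroup h0 E.1).map f = E'.1.map f := by
          rw [map_conjSubgroup]
          exact hg
        obtain ⟨hel', hc'⟩ := hφprop E'
        obtain ⟨M, hmap, hinjM, hMp, hmax⟩ := key_lemma ℓ hℓ f hker hkerord hel'.2 hel'.1
          (by rintro x ⟨a, -, ha⟩; exact ⟨a, ha⟩)
        have h1 : conjSubgroup h0 E.1 ≤ M :=
          hmax _ ((isPGroup_of_exponent hℓ E.2.1.2).map _) (le_of_eq hg')
        have h2 : E'.1 ≤ M := hmax _ (isPGroup_of_exponent hℓ E'.2.1.2) le_rfl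
        exact Quot.sound ⟨h0, eq_of_map_eq hinjM h1 h2 hg'⟩
  refine ⟨Equiv.ofBijective Φ ⟨hinjΦ, hsurjΦ⟩, ?_⟩
  intro E A hEA
  have hφEA : φ E = A := Subtype.ext hEA.symm
  show Φ (Quot.mk _ E) = _
  rw [hΦmk, hφEA]
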